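/- arXiv:2112.04340 — 2 statements merged into one kernel-verified Lean document; each statement's English description precedes it below -/
import Mathlib

section
/- Let 1 ≤ p < ∞. The function I_p is finite exactly on (0,1), satisfies I_p(e^{m_p}) = 0, and lim_{θ→0+} I_p(θ) = lim_{θ→1−} I_p(θ) = +∞. -/
open MeasureTheory Filter Set

noncomputable section

/-- The digamma function `ψ = Γ'/Γ`. -/
def digammaFn (x : ℝ) : ℝ := deriv Real.Gamma x / Real.Gamma x

/-- `H(x) = ψ(x) - log x`. -/
def Hfun (x : ℝ) : ℝ := digammaFn x - Real.log x

/-- The inverse `H⁻¹` of the increasing bijection `H : (0,∞) → (-∞,0)`. -/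
def Hinv (y : ℝ) : ℝ := Function.invFunOn Hfun (Ioi 0) y

/-- The constant `m_p = (1/p)(ψ(1/p) + log p)`. -/
def mConst (p : ℝ) : ℝ := (1/p) * (digammaFn (1/p) + Real.log p)

/-- `G_p(θ) = H⁻¹(p log θ)`. -/
def Gfun (p θ : ℝ) : ℝ := Hinv (p * Real.log θ)

/-- The rate function
`I_p(θ) = [p G_p(θ) - 1] log θ + G_p(θ)[log G_p(θ) - 1] - log Γ(G_p(θ))
            + (1/p)(1 + log p) + log Γ(1/p)`. -/
def ratefn (p θ : ℝ) : ℝ :=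
  (p * Gfun p θ - 1) * Real.log θ + Gfun p θ * (Real.log (Gfun p θ) - 1)
    - Real.log (Real.Gamma (Gfun p θ)) + (1/p) * (1 + Real.log p)
    + Real.log (Real.Gamma (1/p))

/-- The rate function `I_p`, extended by `+∞` outside `(0,1)` (with values in `EReal`). -/
def ratefnExt (p : ℝ) (θ : ℝ) : EReal :=
  if θ ∈ Ioo (0:ℝ) 1 then ((ratefn p θ : ℝ) : EReal) else ⊤


open scoped Nat

namespace RateAux


lemma gamma_pos {x : ℝ} (hx : 0 < x) : 0 < Real.Gamma x := Real.Gamma_pos_of_pos hx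

lemma gamma_hasDerivAt {x : ℝ} (hx : 0 < x) : HasDerivAt Real.Gamma (deriv Real.Gamma x) x :=
  (Real.differentiableAt_Gamma fun m =>
    ne_of_gt (lt_of_le_of_lt (neg_nonpos.mpr (Nat.cast_nonneg m)) hx)).hasDerivAt

lemma hasDerivAt_logGamma {x : ℝ} (hx : 0 < x) :
    HasDerivAt (fun y => Real.log (Real.Gamma y)) (digammaFn x) x :=
  (gamma_hasDerivAt hx).log (gamma_pos hx).ne'

lemma digamma_add_one {x : ℝ} (hx : 0 < x) : digammaFn (x + 1) = digammaFn x + 1 / x := by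
  have hx1 : (0:ℝ) < x + 1 := by linarith
  have h1 : HasDerivAt (fun y : ℝ => Real.Gamma (y + 1)) (deriv Real.Gamma (x + 1)) x := by
    simpa [Function.comp_def] using (gamma_hasDerivAt hx1).comp x ((hasDerivAt_id x).add_const 1)
  have h2 : HasDerivAt (fun y : ℝ => y * Real.Gamma y)
      (1 * Real.Gamma x + x * deriv Real.Gamma x) x :=
    (hasDerivAt_id x).mul (gamma_hasDerivAt hx)
  have heq : (fun y : ℝ => Real.Gamma (y + 1)) =ᶠ[nhds x] fun y : ℝ => y * Real.Gamma y := by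
    filter_upwards [eventually_ne_nhds hx.ne'] with y hy
    exact Real.Gamma_add_one hy
  have h3 : deriv Real.Gamma (x + 1) = 1 * Real.Gamma x + x * deriv Real.Gamma x :=
    (h1.congr_of_eventuallyEq heq.symm).unique h2
  have hΓ : Real.Gamma (x + 1) = x * Real.Gamma x := Real.Gamma_add_one hx.ne'
  have hΓx : Real.Gamma x ≠ 0 := (gamma_pos hx).ne'
  unfold digammaFn
  rw [h3, hΓ]
  field_simp
  ring

lemma slope_logGamma {x : ℝ} (hx : 0 < x) :
    Real.log (Real.Gamma (x + 1)) - Real.log (Real.Gamma x) = Real.log x := by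
  rw [Real.Gamma_add_one hx.ne', Real.log_mul hx.ne' (gamma_pos hx).ne']
  ring

lemma digamma_le_log {x : ℝ} (hx : 0 < x) : digammaFn x ≤ Real.log x := by
  have h := Real.convexOn_log_Gamma.le_slope_of_hasDerivAt (mem_Ioi.2 hx)
    (mem_Ioi.2 (by linarith : (0:ℝ) < x + 1)) (lt_add_one x) (hasDerivAt_logGamma hx)
  rw [slope_def_field] at h
  simpa [Function.comp, slope_logGamma hx] using h
  
lemma log_le_digamma_add_one {x : ℝ} (hx : 0 < x) : Real.log x ≤ digammaFn (x + 1) := by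
  have h := Real.convexOn_log_Gamma.slope_le_of_hasDerivAt (mem_Ioi.2 hx)
    (mem_Ioi.2 (by linarith : (0:ℝ) < x + 1)) (lt_add_one x)
    (hasDerivAt_logGamma (by linarith : (0:ℝ) < x + 1))
  rw [slope_def_field] at h
  simpa [Function.comp, slope_logGamma hx] using h

lemma digamma_mono {a b : ℝ} (ha : 0 < a) (hab : a ≤ b) : digammaFn a ≤ digammaFn b := by
  rcases eq_or_lt_of_le hab with rfl | h
  · exact le_rfl
  have hb : 0 < b := lt_trans ha h
  have h1 := Real.convexOn_log_Gamma.le_slope_of_hasDerivAt (mem_Ioi.2 ha)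
    (mem_Ioi.2 hb) h (hasDerivAt_logGamma ha)
  have h2 := Real.convexOn_log_Gamma.slope_le_of_hasDerivAt (mem_Ioi.2 ha)
    (mem_Ioi.2 hb) h (hasDerivAt_logGamma hb)
  exact le_trans h1 h2

lemma Hfun_nonpos {x : ℝ} (hx : 0 < x) : Hfun x ≤ 0 :=
  sub_nonpos.2 (digamma_le_log hx)

lemma Hfun_ge {x : ℝ} (hx : 0 < x) : -(1 / x) ≤ Hfun x := by
  have h := log_le_digamma_add_one hx
  rw [digamma_add_one hx] at h
  unfold Hfun; linarith



def fdiff (x : ℝ) : ℝ := 1 / x - Real.log (x + 1) + Real.log x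

lemma fdiff_pos {x : ℝ} (hx : 0 < x) : 0 < fdiff x := by
  have h1 : (0:ℝ) < (x + 1) / x := by positivity
  have h2 : (x + 1) / x ≠ 1 := by
    intro h; rw [div_eq_one_iff_eq hx.ne'] at h; linarith
  have := Real.log_lt_sub_one_of_pos h1 h2
  rw [Real.log_div (by linarith) hx.ne'] at this
  have : Real.log (x + 1) - Real.log x < (x + 1) / x - 1 := this
  have hx' : (x + 1) / x - 1 = 1 / x := by field_simp; ring
  unfold fdiff; linarith [hx' ▸ this]

lemma fdiff_hasDerivAt {x : ℝ} (hx : 0 < x) :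
    HasDerivAt fdiff (-(1 / x ^ 2) - 1 / (x + 1) + 1 / x) x := by
  have h1 : HasDerivAt (fun y : ℝ => 1 / y) (-(1 / x ^ 2)) x := by
    simpa [one_div] using hasDerivAt_inv hx.ne'
  have h2 : HasDerivAt (fun y : ℝ => Real.log (y + 1)) (1 / (x + 1)) x := by
    simpa using (((hasDerivAt_id x).add_const 1).log (by linarith : x + 1 ≠ 0))
  have h3 : HasDerivAt Real.log (1 / x) x := by
    simpa [one_div] using Real.hasDerivAt_log hx.ne'
  exact (h1.sub h2).add h3

lemma fdiff_strictAnti : StrictAntiOn fdiff (Ioi 0) := by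
  apply strictAntiOn_of_deriv_neg (convex_Ioi 0)
  · intro x hx
    exact ((fdiff_hasDerivAt hx).continuousAt).continuousWithinAt
  · intro x hx
    rw [interior_Ioi, mem_Ioi] at hx
    rw [(fdiff_hasDerivAt hx).deriv]
    have h1 : 1 / x - 1 / (x + 1) = 1 / (x * (x + 1)) := by
      field_simp
      ring
    have h2 : 1 / (x * (x + 1)) < 1 / x ^ 2 :=
      one_div_lt_one_div_of_lt (by positivity) (by nlinarith)
    linarith

lemma Hfun_add_one {x : ℝ} (hx : 0 < x) : Hfun (x + 1) = Hfun x + fdiff x := by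
  unfold Hfun fdiff
  rw [digamma_add_one hx]
  ring

lemma Hfun_add_nat {x : ℝ} (hx : 0 < x) (n : ℕ) :
    Hfun (x + n) = Hfun x + ∑ k ∈ Finset.range n, fdiff (x + k) := by
  induction n with
  | zero => simp
  | succ n ih =>
    have hxn : (0:ℝ) < x + n := by positivity
    have : (x + (n + 1 : ℕ) : ℝ) = (x + n) + 1 := by push_cast; ring
    rw [this, Hfun_add_one hxn, ih, Finset.sum_range_succ]
    ring

lemma Hfun_tendsto_zero_nat {x : ℝ} (hx : 0 < x) :
    Tendsto (fun n : ℕ => Hfun (x + n)) atTop (nhds 0) := by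
  have hlow : Tendsto (fun n : ℕ => -(1 / (x + n))) atTop (nhds 0) := by
    have : Tendsto (fun n : ℕ => x + (n:ℝ)) atTop atTop :=
      tendsto_atTop_add_const_left _ x tendsto_natCast_atTop_atTop
    simpa using (tendsto_inv_atTop_zero.comp this).neg
  refine tendsto_of_tendsto_of_tendsto_of_le_of_le hlow tendsto_const_nhds
    (fun n => Hfun_ge (by positivity)) (fun n => Hfun_nonpos (by positivity))

lemma Hfun_strictMono : StrictMonoOn Hfun (Ioi 0) := by
  intro a ha b hb hab
  rw [mem_Ioi] at ha hb
  have key : ∀ n : ℕ, 1 ≤ n →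
      Hfun (b + n) - Hfun (a + n) ≤ (Hfun b - Hfun a) + (fdiff b - fdiff a) := by
    intro n hn
    rw [Hfun_add_nat hb n, Hfun_add_nat ha n]
    have hsum : ∑ k ∈ Finset.range 1, (fdiff (a + k) - fdiff (b + k)) ≤
        ∑ k ∈ Finset.range n, (fdiff (a + k) - fdiff (b + k)) := by
      apply Finset.sum_le_sum_of_subset_of_nonneg (Finset.range_subset_range.2 hn)
      intro k _ _
      have hak : (0:ℝ) < a + k := by positivity
      have hbk : (0:ℝ) < b + k := by positivity
      have := fdiff_strictAnti (mem_Ioi.2 hak) (mem_Ioi.2 hbk) (by linarith)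
      linarith
    simp only [Finset.range_one, Finset.sum_singleton, Nat.cast_zero, add_zero] at hsum
    rw [Finset.sum_sub_distrib] at hsum
    linarith
  have hlim : Tendsto (fun n : ℕ => Hfun (b + n) - Hfun (a + n)) atTop (nhds 0) := by
    simpa using (Hfun_tendsto_zero_nat hb).sub (Hfun_tendsto_zero_nat ha)
  have h0 : (0:ℝ) ≤ (Hfun b - Hfun a) + (fdiff b - fdiff a) := by
    refine le_of_tendsto hlim ?_
    filter_upwards [eventually_ge_atTop 1] with n hn using key n hn
  have hf : fdiff b < fdiff a := fdiff_strictAnti (mem_Ioi.2 ha) (mem_Ioi.2 hb) hab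
  linarith

lemma Hfun_neg {x : ℝ} (hx : 0 < x) : Hfun x < 0 := by
  have h1 := Hfun_add_one hx
  have h2 := Hfun_nonpos (by linarith : (0:ℝ) < x + 1)
  have h3 := fdiff_pos hx
  linarith


lemma continuousAt_digamma {x : ℝ} (hx : 0 < x) : ContinuousAt digammaFn x := by
  have hne : ∀ z : ℂ, 0 < z.re → ∀ m : ℕ, z ≠ -m := by
    intro z hz m h
    rw [h] at hz
    simp only [Complex.neg_re, Complex.natCast_re] at hz
    have : (0:ℝ) ≤ m := Nat.cast_nonneg m
    linarith
  have hVo : IsOpen {z : ℂ | 0 < z.re} := isOpen_lt continuous_const Complex.continuous_re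
  have hd : DifferentiableOn ℂ Complex.Gamma {z : ℂ | 0 < z.re} := fun z hz =>
    (Complex.differentiableAt_Gamma z (hne z hz)).differentiableWithinAt
  have han : AnalyticOnNhd ℂ Complex.Gamma {z : ℂ | 0 < z.re} := hd.analyticOnNhd hVo
  have hder := han.deriv
  have hxmem : (x : ℂ) ∈ {z : ℂ | 0 < z.re} := by simp [hx]
  have contc : ContinuousAt (deriv Complex.Gamma) (x : ℂ) := (hder _ hxmem).continuousAt
  have hre : ContinuousAt (fun y : ℝ => (deriv Complex.Gamma (y : ℂ)).re) x :=
    Complex.continuous_re.continuousAt.comp (contc.comp Complex.continuous_ofReal.continuousAt)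
  have heq : ∀ y : ℝ, 0 < y → deriv Real.Gamma y = (deriv Complex.Gamma (y : ℂ)).re := by
    intro y hy
    have h1 : HasDerivAt Real.Gamma (deriv Complex.Gamma (y : ℂ)).re y :=
      (Complex.differentiableAt_Gamma _ (hne y (by simpa using hy))).hasDerivAt.real_of_complex
    exact h1.deriv
  have hcd : ContinuousAt (deriv Real.Gamma) x := by
    apply hre.congr
    filter_upwards [eventually_gt_nhds hx] with y hy using (heq y hy).symm
  exact hcd.div ((Real.differentiableAt_Gamma fun m =>
    ne_of_gt (lt_of_le_of_lt (neg_nonpos.mpr (Nat.cast_nonneg m)) hx)).continuousAt)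
    (gamma_pos hx).ne'

lemma continuousAt_Hfun {x : ℝ} (hx : 0 < x) : ContinuousAt Hfun x :=
  (continuousAt_digamma hx).sub (Real.continuousAt_log hx.ne')

lemma tendsto_one_div_add_log {c : ℝ} (hc : 0 < c) :
    Tendsto (fun x : ℝ => 1 / x + c * Real.log x) (nhdsWithin 0 (Ioi 0)) atTop := by
  have hg : Tendsto (fun u : ℝ => u - c * Real.log u) atTop atTop := by
    have hhalf : Tendsto (fun u : ℝ => u / 2) atTop atTop :=
      tendsto_id.atTop_div_const (by norm_num : (0:ℝ) < 2)
    refine tendsto_atTop_mono' _ ?_ hhalf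
    have hev := (Real.isLittleO_log_id_atTop.bound (by positivity : (0:ℝ) < 1 / (2 * c)))
    filter_upwards [hev, eventually_ge_atTop (1:ℝ)] with u hu h1
    simp only [id_eq, Real.norm_eq_abs] at hu
    rw [abs_of_nonneg (Real.log_nonneg h1), abs_of_nonneg (by linarith : (0:ℝ) ≤ u)] at hu
    have : c * Real.log u ≤ u / 2 := by
      calc c * Real.log u ≤ c * (1 / (2 * c) * u) := by
            apply mul_le_mul_of_nonneg_left hu hc.le
          _ = u / 2 := by field_simp
    linarith
  have h1 : Tendsto (fun x : ℝ => 1 / x) (nhdsWithin 0 (Ioi 0)) atTop := by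
    simpa [one_div] using (tendsto_inv_nhdsGT_zero (𝕜 := ℝ))
  refine (hg.comp h1).congr' ?_
  filter_upwards [self_mem_nhdsWithin] with x (hx : 0 < x)
  simp only [Function.comp]
  rw [Real.log_div one_ne_zero hx.ne', Real.log_one]
  ring

lemma Hfun_tendsto_atBot : Tendsto Hfun (nhdsWithin 0 (Ioi 0)) atBot := by
  have hb : Tendsto (fun x : ℝ => -(1 / x + 1 * Real.log x) + 1) (nhdsWithin 0 (Ioi 0)) atBot :=
    tendsto_atBot_add_const_right _ 1
      (tendsto_neg_atTop_atBot.comp (tendsto_one_div_add_log one_pos))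
  refine tendsto_atBot_mono' _ ?_ hb
  have hIoo : Ioo (0:ℝ) 1 ∈ nhdsWithin 0 (Ioi 0) := by
    apply mem_nhdsWithin.2
    exact ⟨Iio 1, isOpen_Iio, by norm_num, by intro x hx; exact ⟨hx.2, hx.1⟩⟩
  filter_upwards [hIoo] with x hx
  have hx0 : 0 < x := hx.1
  have h1 : Hfun x ≤ -(1 / x - Real.log (x + 1) + Real.log x) := by
    have := Hfun_add_one hx0
    unfold fdiff at this
    have h2 := Hfun_nonpos (by linarith : (0:ℝ) < x + 1)
    linarith
  have h3 : Real.log (x + 1) ≤ 1 := by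
    have : Real.log (x + 1) ≤ Real.log 2 :=
      Real.log_le_log (by linarith) (by linarith [hx.2])
    linarith [Real.log_two_lt_d9]
  linarith

lemma Hfun_surj {y : ℝ} (hy : y < 0) : ∃ x ∈ Ioi (0:ℝ), Hfun x = y := by
  set x₂ : ℝ := -1 / y with hx₂def
  have hx₂ : 0 < x₂ := by
    rw [hx₂def]
    exact div_pos_iff.2 (Or.inr ⟨by norm_num, hy⟩)
  have hub : y ≤ Hfun x₂ := by
    have := Hfun_ge hx₂
    have hxy : -(1 / x₂) = y := by
      rw [hx₂def]; field_simp
    linarith [hxy ▸ this]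
  have hev : ∀ᶠ x in nhdsWithin 0 (Ioi (0:ℝ)), Hfun x ≤ y ∧ x ∈ Ioi (0:ℝ) ∧ x < x₂ := by
    filter_upwards [Hfun_tendsto_atBot.eventually (eventually_le_atBot y),
      self_mem_nhdsWithin,
      mem_nhdsWithin.2 ⟨Iio x₂, isOpen_Iio, hx₂, fun z hz => hz.1⟩] with x h1 h2 h3
    exact ⟨h1, h2, h3⟩
  obtain ⟨x₁, h1, h2, h3⟩ := hev.exists
  have hcont : ContinuousOn Hfun (Icc x₁ x₂) := fun z hz =>
    (continuousAt_Hfun (lt_of_lt_of_le h2 hz.1)).continuousWithinAt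
  obtain ⟨x, hx, hfx⟩ := intermediate_value_Icc h3.le hcont ⟨h1, hub⟩
  exact ⟨x, lt_of_lt_of_le h2 hx.1, hfx⟩

lemma Hinv_Hfun {x : ℝ} (hx : 0 < x) : Hinv (Hfun x) = x := by
  have hmem := Function.invFunOn_apply_mem (f := Hfun) (mem_Ioi.2 hx)
  have heq := Function.invFunOn_apply_eq (f := Hfun) (mem_Ioi.2 hx)
  exact Hfun_strictMono.injOn hmem (mem_Ioi.2 hx) heq

lemma Hfun_Hinv {y : ℝ} (hy : y < 0) : Hfun (Hinv y) = y :=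
  Function.invFunOn_eq (Hfun_surj hy)

lemma Hinv_pos {y : ℝ} (hy : y < 0) : 0 < Hinv y :=
  Function.invFunOn_mem (Hfun_surj hy)

lemma Hinv_lt {y M : ℝ} (hM : 0 < M) (h : y < Hfun M) : Hinv y < M := by
  have hy : y < 0 := lt_trans h (Hfun_neg hM)
  by_contra hcon
  push_neg at hcon
  rcases eq_or_lt_of_le hcon with heq | hlt
  · rw [heq, Hfun_Hinv hy] at h; exact lt_irrefl _ h
  · have := Hfun_strictMono (mem_Ioi.2 hM) (mem_Ioi.2 (Hinv_pos hy)) hlt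
    rw [Hfun_Hinv hy] at this
    linarith
  
lemma lt_Hinv {y M : ℝ} (hM : 0 < M) (h1 : Hfun M < y) (h2 : y < 0) : M < Hinv y := by
  by_contra hcon
  push_neg at hcon
  rcases eq_or_lt_of_le hcon with heq | hlt
  · rw [← heq, Hfun_Hinv h2] at h1; exact lt_irrefl _ h1
  · have := Hfun_strictMono (mem_Ioi.2 (Hinv_pos h2)) (mem_Ioi.2 hM) hlt
    rw [Hfun_Hinv h2] at this
    linarith

lemma Hinv_tendsto_zero : Tendsto Hinv atBot (nhdsWithin 0 (Ioi 0)) := by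
  rw [tendsto_nhdsWithin_iff]
  constructor
  · rw [tendsto_order]
    constructor
    · intro a ha
      filter_upwards [eventually_lt_atBot (0:ℝ)] with y hy
      exact lt_trans ha (Hinv_pos hy)
    · intro a ha
      filter_upwards [eventually_lt_atBot (Hfun a)] with y hy
      exact Hinv_lt ha hy
  · filter_upwards [eventually_lt_atBot (0:ℝ)] with y hy
    exact mem_Ioi.2 (Hinv_pos hy)

lemma Hinv_tendsto_atTop : Tendsto Hinv (nhdsWithin 0 (Iio 0)) atTop := by
  rw [tendsto_atTop]
  intro M
  set M' : ℝ := max M 1 with hM'def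
  have hM' : 0 < M' := lt_of_lt_of_le one_pos (le_max_right _ _)
  have hmem : Ioo (Hfun M') 0 ∈ nhdsWithin 0 (Iio 0) := by
    apply mem_nhdsWithin.2
    exact ⟨Ioi (Hfun M'), isOpen_Ioi, Hfun_neg hM', fun z hz => ⟨hz.1, hz.2⟩⟩
  filter_upwards [hmem] with y hy
  have := lt_Hinv hM' hy.1 hy.2
  exact le_trans (le_max_left M 1) this.le



lemma factorial_le_stirling (n : ℕ) (hn : 1 ≤ n) :
    (n ! : ℝ) ≤ Real.exp 1 * Real.sqrt n * ((n : ℝ) / Real.exp 1) ^ n := by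
  have hseq : Stirling.stirlingSeq n ≤ Stirling.stirlingSeq 1 := by
    cases n with
    | zero => omega
    | succ m => exact Stirling.stirlingSeq'_antitone (Nat.zero_le m)
  rw [Stirling.stirlingSeq_one] at hseq
  have hn0 : (0:ℝ) < n := by exact_mod_cast hn
  have hd : (0:ℝ) < Real.sqrt (2 * n) * ((n : ℝ) / Real.exp 1) ^ n := by positivity
  have h := (div_le_iff₀ hd).1 hseq
  refine le_trans h ?_
  have hsqrt : Real.sqrt (2 * (n:ℝ)) = Real.sqrt 2 * Real.sqrt n := Real.sqrt_mul (by norm_num) _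
  rw [hsqrt]
  have h2 : Real.sqrt 2 ≠ 0 := by positivity
  apply le_of_eq
  field_simp

lemma log_factorial_le (n : ℕ) (hn : 1 ≤ n) :
    Real.log (n !) ≤ n * Real.log n - n + (1/2) * Real.log n + 1 := by
  have hn0 : (0:ℝ) < n := by exact_mod_cast hn
  have h := factorial_le_stirling n hn
  have hfac : (0:ℝ) < (n ! : ℝ) := by exact_mod_cast Nat.factorial_pos n
  have hlog := Real.log_le_log hfac h
  rw [Real.log_mul (by positivity) (by positivity), Real.log_mul (Real.exp_ne_zero 1)
    (by positivity), Real.log_exp, Real.log_sqrt hn0.le, Real.log_pow,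
    Real.log_div hn0.ne' (Real.exp_ne_zero 1), Real.log_exp] at hlog
  push_cast at hlog ⊢
  linarith

lemma logGamma_le {x : ℝ} (hx : 2 ≤ x) :
    Real.log (Real.Gamma x) ≤ (x - 1/2) * Real.log x - x + 3 := by
  obtain ⟨n, hndef⟩ : ∃ n : ℕ, ⌊x⌋₊ = n := ⟨_, rfl⟩
  have hn2 : 2 ≤ n := hndef ▸ Nat.le_floor (by exact_mod_cast hx)
  have hnx : (n:ℝ) ≤ x := hndef ▸ Nat.floor_le (by linarith)
  have hxn : x < n + 1 := hndef ▸ Nat.lt_floor_add_one x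
  have hn0 : (0:ℝ) < n := by exact_mod_cast lt_of_lt_of_le two_pos hn2
  set t : ℝ := x - n with htdef
  have ht0 : 0 ≤ t := by simp [htdef]; linarith
  have ht1 : t < 1 := by simp [htdef]; linarith
  -- convexity of log ∘ Gamma
  have hcc := Real.convexOn_log_Gamma.2 (mem_Ioi.2 hn0)
    (mem_Ioi.2 (by linarith : (0:ℝ) < (n:ℝ) + 1)) (by linarith : (0:ℝ) ≤ 1 - t) ht0
    (by ring : (1 - t) + t = 1)
  simp only [smul_eq_mul, Function.comp] at hcc
  have hxeq : (1 - t) * (n:ℝ) + t * ((n:ℝ) + 1) = x := by rw [htdef]; ring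
  rw [hxeq] at hcc
  -- Gamma values at integers
  have hm : n - 1 + 1 = n := by omega
  have hg1 : Real.Gamma (n:ℝ) = ((n-1)! : ℝ) := by
    have h := Real.Gamma_nat_eq_factorial (n - 1)
    have hc : ((n-1:ℕ):ℝ) + 1 = (n:ℝ) := by
      rw [Nat.cast_sub (by omega : 1 ≤ n)]; ring
    rw [hc] at h
    exact h
  have hg2 : Real.Gamma ((n:ℝ) + 1) = (n ! : ℝ) := by exact_mod_cast Real.Gamma_nat_eq_factorial n
  rw [hg1, hg2] at hcc
  have hfacsplit : Real.log (n ! : ℝ) = Real.log n + Real.log ((n-1)! : ℝ) := by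
    have : (n ! : ℝ) = (n : ℝ) * ((n-1)! : ℝ) := by
      exact_mod_cast (Nat.mul_factorial_pred (by omega : n ≠ 0)).symm
    rw [this, Real.log_mul hn0.ne' (by exact_mod_cast (Nat.factorial_pos (n-1)).ne')]
  have hlf := log_factorial_le (n-1) (by omega)
  have hcast : ((n - 1 : ℕ) : ℝ) = (n : ℝ) - 1 := by
    rw [Nat.cast_sub (by omega : 1 ≤ n)]; norm_num
  rw [hcast] at hlf
  have hlog1 : Real.log ((n:ℝ) - 1) ≤ Real.log n := Real.log_le_log (by
    have : (2:ℝ) ≤ n := by exact_mod_cast hn2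
    linarith) (by linarith)
  have hlogn : Real.log (n:ℝ) ≤ Real.log x := Real.log_le_log hn0 hnx
  have hlogn0 : 0 ≤ Real.log (n:ℝ) := Real.log_nonneg (by exact_mod_cast hn2.trans' (by omega))
  -- combine
  have step1 : Real.log (Real.Gamma x) ≤ Real.log ((n-1)! : ℝ) + t * Real.log n := by
    rw [hfacsplit] at hcc
    nlinarith [hcc]
  have step2 : Real.log ((n-1)! : ℝ) ≤ ((n:ℝ) - 1/2) * Real.log n - (n:ℝ) + 2 := by
    have hc : ((n:ℝ) - 1 + 1/2) * (Real.log (n:ℝ) - Real.log ((n:ℝ) - 1)) ≥ 0 := by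
      apply mul_nonneg
      · have : (2:ℝ) ≤ n := by exact_mod_cast hn2
        linarith
      · linarith
    nlinarith [hlf]
  have step3 : ((n:ℝ) + t - 1/2) * Real.log (n:ℝ) ≤ (x - 1/2) * Real.log x := by
    have hxn' : (n:ℝ) + t - 1/2 = x - 1/2 := by rw [htdef]; ring
    rw [hxn']
    apply mul_le_mul_of_nonneg_left hlogn (by linarith)
  have : (2:ℝ) ≤ (n:ℝ) := by exact_mod_cast hn2
  nlinarith [step1, step2, step3, mul_nonneg ht0 hlogn0]


variable {p : ℝ}

lemma plog_neg (hp : 1 ≤ p) {θ : ℝ} (hθ : θ ∈ Ioo (0:ℝ) 1) : p * Real.log θ < 0 :=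
  mul_neg_of_pos_of_neg (lt_of_lt_of_le one_pos hp) (Real.log_neg hθ.1 hθ.2)

lemma Gfun_pos (hp : 1 ≤ p) {θ : ℝ} (hθ : θ ∈ Ioo (0:ℝ) 1) : 0 < Gfun p θ :=
  Hinv_pos (plog_neg hp hθ)

lemma Hfun_Gfun (hp : 1 ≤ p) {θ : ℝ} (hθ : θ ∈ Ioo (0:ℝ) 1) :
    Hfun (Gfun p θ) = p * Real.log θ :=
  Hfun_Hinv (plog_neg hp hθ)

lemma part2 (hp : 1 ≤ p) : ratefn p (Real.exp (mConst p)) = 0 := by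
  have hp0 : 0 < p := lt_of_lt_of_le one_pos hp
  have hip : 0 < 1/p := by positivity
  have hH : p * mConst p = Hfun (1/p) := by
    unfold mConst Hfun
    rw [Real.log_div one_ne_zero hp0.ne', Real.log_one]
    field_simp
    ring
  have hg : Gfun p (Real.exp (mConst p)) = 1/p := by
    unfold Gfun
    rw [Real.log_exp, hH, Hinv_Hfun hip]
  unfold ratefn
  rw [hg, Real.log_exp]
  unfold mConst
  rw [Real.log_div one_ne_zero hp0.ne', Real.log_one]
  field_simp
  ring

lemma ratefn_eq (hp : 1 ≤ p) {θ : ℝ} (hθ : θ ∈ Ioo (0:ℝ) 1) :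
    ratefn p θ = 1/(p * Gfun p θ) + (1 + 1/p) * Real.log (Gfun p θ)
      + ((Gfun p θ - 1/p) * digammaFn (Gfun p θ + 1) - 1 - Gfun p θ
        - Real.log (Real.Gamma (Gfun p θ + 1)) + (1/p) * (1 + Real.log p)
        + Real.log (Real.Gamma (1/p))) := by
  have hp0 : 0 < p := lt_of_lt_of_le one_pos hp
  set G := Gfun p θ with hGdef
  have hG : 0 < G := Gfun_pos hp hθ
  have hlogθ : Real.log θ = (digammaFn G - Real.log G) / p := by
    have h := Hfun_Gfun hp hθ
    unfold Hfun at h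
    rw [← hGdef] at h
    rw [eq_div_iff hp0.ne']
    linarith
  have hψ : digammaFn G = digammaFn (G + 1) - 1/G := by
    rw [digamma_add_one hG]; ring
  have hΓ : Real.log (Real.Gamma G) = Real.log (Real.Gamma (G+1)) - Real.log G := by
    rw [Real.Gamma_add_one hG.ne', Real.log_mul hG.ne' (gamma_pos hG).ne']; ring
  unfold ratefn
  rw [← hGdef, hlogθ, hψ, hΓ]
  field_simp
  ring

lemma part3 (hp : 1 ≤ p) : Tendsto (fun θ => ratefn p θ) (nhdsWithin 0 (Ioi 0)) atTop := by
  have hp0 : 0 < p := lt_of_lt_of_le one_pos hp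
  have hlog : Tendsto (fun θ : ℝ => p * Real.log θ) (nhdsWithin 0 (Ioi 0)) atBot :=
    (Real.tendsto_log_nhdsGT_zero).const_mul_atBot hp0
  have hG : Tendsto (fun θ => Gfun p θ) (nhdsWithin 0 (Ioi 0)) (nhdsWithin 0 (Ioi 0)) :=
    Hinv_tendsto_zero.comp hlog
  set A : ℝ := |digammaFn 1| + |digammaFn 2| + 2
    - ((1/p) * (1 + Real.log p) + Real.log (Real.Gamma (1/p))) with hAdef
  have hφ : Tendsto (fun g : ℝ => 1/(p*g) + (1 + 1/p) * Real.log g - A)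
      (nhdsWithin 0 (Ioi 0)) atTop := by
    have h1 : Tendsto (fun g : ℝ => 1/g + (p+1) * Real.log g) (nhdsWithin 0 (Ioi 0)) atTop :=
      tendsto_one_div_add_log (by linarith)
    have h2 := h1.const_mul_atTop (show (0:ℝ) < 1/p by positivity)
    refine tendsto_atTop_mono' _ ?_ (tendsto_atTop_add_const_right _ (-A) h2)
    filter_upwards [self_mem_nhdsWithin] with g (hg : 0 < g)
    apply le_of_eq
    field_simp
    ring
  have hcomp := hφ.comp hG
  refine tendsto_atTop_mono' _ ?_ hcomp
  have hIoo : Ioo (0:ℝ) 1 ∈ nhdsWithin 0 (Ioi (0:ℝ)) :=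
    mem_nhdsWithin.2 ⟨Iio 1, isOpen_Iio, by norm_num, fun z hz => ⟨hz.2, hz.1⟩⟩
  have hGlt : ∀ᶠ θ in nhdsWithin 0 (Ioi (0:ℝ)), Gfun p θ < 1 :=
    hG.eventually (by
      filter_upwards [mem_nhdsWithin_of_mem_nhds (Iio_mem_nhds one_pos)] with g hg using hg)
  filter_upwards [hIoo, hGlt] with θ hθ hG1
  rw [ratefn_eq hp hθ]
  simp only [Function.comp]
  set G := Gfun p θ with hGdef
  have hG0 : 0 < G := Gfun_pos hp hθ
  have hinvp : 1/p ≤ 1 := by rw [div_le_one hp0]; exact hp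
  have hinvp0 : 0 < 1/p := by positivity
  have hψlo : digammaFn 1 ≤ digammaFn (G+1) := digamma_mono one_pos (by linarith)
  have hψhi : digammaFn (G+1) ≤ digammaFn 2 := digamma_mono (by linarith) (by linarith)
  have habs : |G - 1/p| ≤ 1 := abs_le.2 ⟨by linarith, by linarith⟩
  have hv : |digammaFn (G+1)| ≤ |digammaFn 1| + |digammaFn 2| := by
    rw [abs_le]
    constructor
    · have := neg_abs_le (digammaFn 1)
      have := abs_nonneg (digammaFn 2)
      linarith
    · have := le_abs_self (digammaFn 2)
      have := abs_nonneg (digammaFn 1)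
      linarith
  have hprod : -(|digammaFn 1| + |digammaFn 2|) ≤ (G - 1/p) * digammaFn (G+1) := by
    have h1 := neg_abs_le ((G - 1/p) * digammaFn (G+1))
    have h2 : |(G - 1/p) * digammaFn (G+1)| ≤ 1 * (|digammaFn 1| + |digammaFn 2|) := by
      rw [abs_mul]
      exact mul_le_mul habs hv (abs_nonneg _) one_pos.le
    linarith
  have hΓle : Real.log (Real.Gamma (G+1)) ≤ 0 := by
    have hcc := Real.convexOn_log_Gamma.2 (mem_Ioi.2 one_pos) (mem_Ioi.2 two_pos)
      (by linarith : (0:ℝ) ≤ 1 - G) hG0.le (by ring : (1 - G) + G = 1)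
    simp only [smul_eq_mul, Function.comp] at hcc
    have heq : (1 - G) * (1:ℝ) + G * 2 = G + 1 := by ring
    rw [heq, Real.Gamma_one, Real.Gamma_two, Real.log_one] at hcc
    linarith
  linarith

lemma part4 (hp : 1 ≤ p) : Tendsto (fun θ => ratefn p θ) (nhdsWithin 1 (Iio 1)) atTop := by
  have hp0 : 0 < p := lt_of_lt_of_le one_pos hp
  have hIoo : Ioo (0:ℝ) 1 ∈ nhdsWithin 1 (Iio (1:ℝ)) :=
    mem_nhdsWithin.2 ⟨Ioi 0, isOpen_Ioi, mem_Ioi.2 one_pos, fun z hz => ⟨hz.1, hz.2⟩⟩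
  have hlog : Tendsto (fun θ : ℝ => p * Real.log θ) (nhdsWithin 1 (Iio 1))
      (nhdsWithin 0 (Iio 0)) := by
    rw [tendsto_nhdsWithin_iff]
    constructor
    · have hc : ContinuousAt (fun θ : ℝ => p * Real.log θ) 1 :=
        continuousAt_const.mul (Real.continuousAt_log one_ne_zero)
      have h2 := hc.tendsto.mono_left (nhdsWithin_le_nhds (s := Iio (1:ℝ)))
      simpa using h2
    · filter_upwards [hIoo] with θ hθ
      exact plog_neg hp hθ
  have hG : Tendsto (fun θ => Gfun p θ) (nhdsWithin 1 (Iio 1)) atTop :=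
    Hinv_tendsto_atTop.comp hlog
  have hbound : Tendsto (fun θ => (1/2) * Real.log (Gfun p θ) +
      (-4 + ((1/p) * (1 + Real.log p) + Real.log (Real.Gamma (1/p)))))
      (nhdsWithin 1 (Iio 1)) atTop :=
    tendsto_atTop_add_const_right _ _
      ((Real.tendsto_log_atTop.comp hG).const_mul_atTop one_half_pos)
  refine tendsto_atTop_mono' _ ?_ hbound
  have hG2 : ∀ᶠ θ in nhdsWithin 1 (Iio (1:ℝ)), 2 ≤ Gfun p θ :=
    hG.eventually (eventually_ge_atTop 2)
  filter_upwards [hIoo, hG2] with θ hθ h2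
  set G := Gfun p θ with hGdef
  have hG0 : 0 < G := by linarith
  have hH : Hfun G = p * Real.log θ := by rw [hGdef]; exact Hfun_Gfun hp hθ
  have hHneg : Hfun G < 0 := Hfun_neg hG0
  have hHge : -(1/G) ≤ Hfun G := Hfun_ge hG0
  have hlogθ : Real.log θ = Hfun G / p := by rw [eq_div_iff hp0.ne']; linarith [hH]
  have hstir := logGamma_le h2
  have h1 : -1 ≤ (p * G - 1) * Real.log θ := by
    rw [hlogθ]
    have ha : G * Hfun G ≤ (p * G - 1) * (Hfun G / p) := by
      rw [← sub_nonneg]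
      have heq : (p * G - 1) * (Hfun G / p) - G * Hfun G = (-Hfun G) * (1/p) := by
        field_simp
        ring
      rw [heq]
      exact mul_nonneg (by linarith) (by positivity)
    have hb : -1 ≤ G * Hfun G := by
      have hmul := mul_le_mul_of_nonneg_left hHge hG0.le
      have hGG : G * -(1/G) = -1 := by field_simp
      linarith
    linarith
  unfold ratefn
  rw [← hGdef]
  linarith [h1, hstir]


end RateAux

/-- `I_p` is finite exactly on `(0,1)`, `I_p(e^{m_p}) = 0`, and
`I_p(θ) → +∞` as `θ → 0⁺` and as `θ → 1⁻`. -/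
theorem statement7 (p : ℝ) (hp : 1 ≤ p) :
    (∀ θ : ℝ, ratefnExt p θ ≠ ⊤ ↔ θ ∈ Ioo (0:ℝ) 1) ∧
    ratefn p (Real.exp (mConst p)) = 0 ∧
    Tendsto (fun θ => ratefn p θ) (nhdsWithin 0 (Ioi 0)) atTop ∧
    Tendsto (fun θ => ratefn p θ) (nhdsWithin 1 (Iio 1)) atTop := by
  refine ⟨?_, RateAux.part2 hp, RateAux.part3 hp, RateAux.part4 hp⟩
  intro θ
  unfold ratefnExt
  split_ifs with h
  · simp [h]
  · simp [h]
end
end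

section
/- Let 1 ≤ p < ∞. The function I_p is strictly decreasing on the interval (0, e^{m_p}) and strictly increasing on the interval (e^{m_p}, 1). -/
open Filter Set

noncomputable section

lemma gamma_diff {x : ℝ} (hx : 0 < x) : DifferentiableAt ℝ Real.Gamma x :=
  Real.differentiableAt_Gamma fun m =>
    (lt_of_le_of_lt (neg_nonpos.mpr (Nat.cast_nonneg m)) hx).ne'

lemma hasDerivAt_logGamma {x : ℝ} (hx : 0 < x) :
    HasDerivAt (fun y => Real.log (Real.Gamma y)) (digammaFn x) x :=
  ((gamma_diff hx).hasDerivAt).log (Real.Gamma_pos_of_pos hx).ne'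

lemma deriv_logGamma {x : ℝ} (hx : 0 < x) :
    deriv (fun y => Real.log (Real.Gamma y)) x = digammaFn x :=
  (hasDerivAt_logGamma hx).deriv

lemma digamma_rec {x : ℝ} (hx : 0 < x) : digammaFn (x + 1) = digammaFn x + x⁻¹ := by
  have hA : HasDerivAt (fun y => Real.log (Real.Gamma (y + 1))) (digammaFn (x + 1)) x := by
    simpa [Function.comp_def] using (hasDerivAt_logGamma (by linarith : 0 < x + 1)).comp x
      ((hasDerivAt_id x).add_const 1)
  have hEq : (fun y => Real.log (Real.Gamma (y + 1))) =ᶠ[nhds x]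
      (fun y => Real.log (Real.Gamma y) + Real.log y) := by
    filter_upwards [eventually_gt_nhds hx] with y hy
    rw [Real.Gamma_add_one hy.ne', Real.log_mul hy.ne' (Real.Gamma_pos_of_pos hy).ne', add_comm]
  have hA' : HasDerivAt (fun y => Real.log (Real.Gamma y) + Real.log y) (digammaFn (x + 1)) x :=
    hA.congr_of_eventuallyEq hEq.symm
  have hB : HasDerivAt (fun y => Real.log (Real.Gamma y) + Real.log y) (digammaFn x + x⁻¹) x :=
    (hasDerivAt_logGamma hx).add (Real.hasDerivAt_log hx.ne')
  exact hA'.unique hB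

lemma digamma_le_log {x : ℝ} (hx : 0 < x) : digammaFn x ≤ Real.log x := by
  have hc := Real.convexOn_log_Gamma
  have h := hc.deriv_le_slope (mem_Ioi.mpr hx) (mem_Ioi.mpr (by linarith : (0:ℝ) < x + 1))
    (by linarith) ((gamma_diff hx).log (Real.Gamma_pos_of_pos hx).ne')
  rw [slope_def_field, show x + 1 - x = (1:ℝ) by ring, div_one] at h
  have hd : deriv (Real.log ∘ Real.Gamma) x = digammaFn x := deriv_logGamma hx
  rw [hd] at h
  calc digammaFn x ≤ (Real.log ∘ Real.Gamma) (x+1) - (Real.log ∘ Real.Gamma) x := h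
    _ = Real.log x := by
        simp only [Function.comp_apply, Real.Gamma_add_one hx.ne',
          Real.log_mul hx.ne' (Real.Gamma_pos_of_pos hx).ne']
        ring

lemma log_le_digamma_succ {x : ℝ} (hx : 0 < x) : Real.log x ≤ digammaFn (x + 1) := by
  have hc := Real.convexOn_log_Gamma
  have h := hc.slope_le_deriv (mem_Ioi.mpr hx) (mem_Ioi.mpr (by linarith : (0:ℝ) < x + 1))
    (by linarith) (((gamma_diff (by linarith : (0:ℝ) < x+1)).log
      (Real.Gamma_pos_of_pos (by linarith : (0:ℝ) < x+1)).ne'))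
  rw [slope_def_field, show x + 1 - x = (1:ℝ) by ring, div_one] at h
  have hd : deriv (Real.log ∘ Real.Gamma) (x+1) = digammaFn (x+1) := deriv_logGamma (by linarith)
  rw [hd] at h
  calc Real.log x = (Real.log ∘ Real.Gamma) (x+1) - (Real.log ∘ Real.Gamma) x := by
        simp only [Function.comp_apply, Real.Gamma_add_one hx.ne',
          Real.log_mul hx.ne' (Real.Gamma_pos_of_pos hx).ne']
        ring
    _ ≤ digammaFn (x+1) := h

lemma Hfun_nonpos {x : ℝ} (hx : 0 < x) : Hfun x ≤ 0 :=
  sub_nonpos.mpr (digamma_le_log hx)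

lemma neg_inv_le_Hfun {x : ℝ} (hx : 0 < x) : -x⁻¹ ≤ Hfun x := by
  have h1 := log_le_digamma_succ hx
  have h2 := digamma_rec hx
  rw [Hfun]
  linarith

def aFun (t : ℝ) : ℝ := t⁻¹ - Real.log (t + 1) + Real.log t

lemma aFun_hasDeriv {t : ℝ} (ht : 0 < t) :
    HasDerivAt aFun (-(t^2)⁻¹ - (t+1)⁻¹ + t⁻¹) t := by
  have hA : HasDerivAt (fun t : ℝ => t⁻¹) (-(t^2)⁻¹) t := hasDerivAt_inv ht.ne'
  have hB : HasDerivAt (fun t : ℝ => Real.log (t + 1)) ((t+1)⁻¹) t := by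
    simpa [Function.comp_def] using (Real.hasDerivAt_log (by positivity : t + 1 ≠ 0)).comp t
      ((hasDerivAt_id t).add_const 1)
  exact (hA.sub hB).add (Real.hasDerivAt_log ht.ne')

lemma aFun_strictAntiOn : StrictAntiOn aFun (Ioi 0) := by
  apply strictAntiOn_of_deriv_neg (convex_Ioi 0)
  · exact fun x hx => (aFun_hasDeriv hx).continuousAt.continuousWithinAt
  · intro x hx
    rw [interior_Ioi, mem_Ioi] at hx
    rw [(aFun_hasDeriv hx).deriv]
    have hx1 : (0:ℝ) < x + 1 := by linarith
    have key : x⁻¹ - (x+1)⁻¹ = (x^2 + x)⁻¹ := by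
      rw [inv_sub_inv hx.ne' hx1.ne']
      congr 1 <;> ring
    have h2 : (x^2 + x)⁻¹ < (x^2)⁻¹ := by
      apply inv_strictAnti₀ (pow_pos hx 2)
      nlinarith
    linarith [key, h2]

lemma Hfun_succ {x : ℝ} (hx : 0 < x) : Hfun (x + 1) = Hfun x + aFun x := by
  simp only [Hfun, aFun, digamma_rec hx]
  ring

lemma tendsto_Hfun_add_nat {x : ℝ} (hx : 0 < x) :
    Tendsto (fun n : ℕ => Hfun (x + n)) atTop (nhds 0) := by
  have hpos : ∀ n : ℕ, (0:ℝ) < x + n := fun n => by positivity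
  have hlow : Tendsto (fun n : ℕ => -(x + (n:ℝ))⁻¹) atTop (nhds 0) := by
    have : Tendsto (fun n : ℕ => x + (n:ℝ)) atTop atTop :=
      tendsto_atTop_add_const_left _ _ tendsto_natCast_atTop_atTop
    simpa using (this.inv_tendsto_atTop).neg
  refine tendsto_of_tendsto_of_tendsto_of_le_of_le hlow tendsto_const_nhds
    (fun n => neg_inv_le_Hfun (hpos n)) (fun n => Hfun_nonpos (hpos n))

lemma Hfun_strictMonoOn : StrictMonoOn Hfun (Ioi 0) := by
  intro x hx y hy hxy
  simp only [mem_Ioi] at hx hy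
  set S : ℕ → ℝ := fun n => Hfun (y + n) - Hfun (x + n) with hS
  have hstep : ∀ n : ℕ, S (n + 1) = S n + (aFun (y + n) - aFun (x + n)) := by
    intro n
    have h1 : Hfun (x + n + 1) = Hfun (x + n) + aFun (x + n) := Hfun_succ (by positivity)
    have h2 : Hfun (y + n + 1) = Hfun (y + n) + aFun (y + n) := Hfun_succ (by positivity)
    simp only [hS]
    push_cast
    rw [show y + ((n:ℝ) + 1) = y + n + 1 by ring, show x + ((n:ℝ) + 1) = x + n + 1 by ring,
      h1, h2]
    ring
  have hanti : Antitone S := by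
    apply antitone_nat_of_succ_le
    intro n
    rw [hstep n]
    have : aFun (y + n) ≤ aFun (x + n) :=
      aFun_strictAntiOn.antitoneOn (by positivity : (0:ℝ) < x + n)
        (by positivity : (0:ℝ) < y + n) (by linarith)
    linarith
  have hlim : Tendsto S atTop (nhds 0) := by
    simpa using (tendsto_Hfun_add_nat hy).sub (tendsto_Hfun_add_nat hx)
  have hge : ∀ n, 0 ≤ S n := fun n => hanti.le_of_tendsto hlim n
  have hS0 : S 0 = Hfun y - Hfun x := by simp [hS]
  have hkey : S 1 = S 0 + (aFun y - aFun x) := by simpa using hstep 0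
  have haxy : aFun y < aFun x := aFun_strictAntiOn hx hy hxy
  have := hge 1
  linarith [hS0, hkey]

lemma Phi_hasDeriv {x : ℝ} (hx : 0 < x) :
    HasDerivAt (fun y => Real.log (Real.Gamma y) - (y * Real.log y - y)) (Hfun x) x := by
  have h1 : HasDerivAt (fun y : ℝ => y * Real.log y) (1 * Real.log x + x * x⁻¹) x :=
    (hasDerivAt_id x).mul (Real.hasDerivAt_log hx.ne')
  have h2 := (hasDerivAt_logGamma hx).sub (h1.sub (hasDerivAt_id x))
  refine h2.congr_deriv ?_
  rw [Hfun]
  field_simp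
  ring

lemma Hfun_le_aux {a : ℝ} (ha : 0 < a) (ha1 : a ≤ 1) : Hfun a ≤ Real.log 2 - (2*a)⁻¹ := by
  have h1 : digammaFn a = digammaFn (a + 1) - a⁻¹ := by
    rw [digamma_rec ha]; ring
  have h2 : digammaFn (a + 1) ≤ Real.log (a + 1) := digamma_le_log (by linarith)
  have h3 : Real.log (a + 1) ≤ a := by
    have := Real.log_le_sub_one_of_pos (by linarith : (0:ℝ) < a + 1)
    linarith
  -- log a ≥ 1 - a⁻¹ applied to 2a : log(2a) ≥ 1 - (2a)⁻¹
  have h4 : 1 - (2*a)⁻¹ ≤ Real.log (2*a) := by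
    have h := Real.log_le_sub_one_of_pos (by positivity : (0:ℝ) < (2*a)⁻¹)
    rw [Real.log_inv] at h
    linarith
  have h5 : Real.log (2*a) = Real.log 2 + Real.log a := by
    rw [Real.log_mul two_ne_zero ha.ne']
  have h6 : a⁻¹ = (2*a)⁻¹ + (2*a)⁻¹ := by
    field_simp
    ring
  rw [Hfun]
  -- Hfun a = ψ(a+1) - a⁻¹ - log a ≤ a - a⁻¹ - log a
  have hla : 1 - (2*a)⁻¹ - Real.log 2 ≤ Real.log a := by linarith
  calc digammaFn a - Real.log a ≤ a - a⁻¹ - Real.log a := by linarith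
    _ ≤ a - a⁻¹ - (1 - (2*a)⁻¹ - Real.log 2) := by linarith
    _ ≤ Real.log 2 - (2*a)⁻¹ := by
        rw [h6]; linarith

lemma Hfun_surjOn {y : ℝ} (hy : y < 0) : ∃ x ∈ Ioi (0:ℝ), Hfun x = y := by
  set b : ℝ := (-y)⁻¹ + 1 with hb_def
  have hyb : 0 < -y := by linarith
  have hb : 0 < b := by positivity
  have hHb : y < Hfun b := by
    have h1 : b⁻¹ < -y := by
      rw [inv_lt_comm₀ hb hyb]
      simp only [hb_def]
      linarith [inv_pos.mpr hyb]
    have := neg_inv_le_Hfun hb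
    linarith
  have hl2 : (0:ℝ) < Real.log 2 - y := by
    have := Real.log_pos (by norm_num : (1:ℝ) < 2)
    linarith
  set a : ℝ := min (min 1 (b/2)) ((4*(Real.log 2 - y))⁻¹) with ha_def
  have ha : 0 < a := by positivity
  have ha1 : a ≤ 1 := le_trans (min_le_left _ _) (min_le_left _ _)
  have hab : a < b := lt_of_le_of_lt (le_trans (min_le_left _ _) (min_le_right _ _)) (half_lt_self hb)
  have hainv : 2*(Real.log 2 - y) ≤ (2*a)⁻¹ := by
    have h1 : a ≤ (4*(Real.log 2 - y))⁻¹ := min_le_right _ _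
    have h2 : 2*a ≤ (2*(Real.log 2 - y))⁻¹ := by
      rw [show ((2:ℝ)*(Real.log 2 - y))⁻¹ = 2 * (4*(Real.log 2 - y))⁻¹ by
        field_simp; ring]
      linarith
    calc 2*(Real.log 2 - y) = ((2*(Real.log 2 - y))⁻¹)⁻¹ := by
          rw [inv_inv]
      _ ≤ (2*a)⁻¹ := by
          apply inv_anti₀ (by positivity) h2
  have hHa : Hfun a < y := by
    have := Hfun_le_aux ha ha1
    have hlog2 := Real.log_pos (by norm_num : (1:ℝ) < 2)
    -- Hfun a ≤ log 2 - (2a)⁻¹ ≤ log 2 - 2(log 2 - y) = 2y - log 2 < y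
    have h5 : Hfun a ≤ Real.log 2 - 2*(Real.log 2 - y) := by linarith
    linarith
  -- Darboux
  have hD := exists_hasDerivWithinAt_eq_of_gt_of_lt (f := fun y =>
      Real.log (Real.Gamma y) - (y * Real.log y - y)) (f' := Hfun) hab.le
    (fun x hx => (Phi_hasDeriv (lt_of_lt_of_le ha hx.1)).hasDerivWithinAt)
    hHa hHb
  obtain ⟨c, hc, hcy⟩ := hD
  exact ⟨c, lt_trans ha hc.1, hcy⟩

lemma Hinv_pos {y : ℝ} (hy : y < 0) : 0 < Hinv y :=
  Function.invFunOn_mem (Hfun_surjOn hy)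

lemma Hfun_Hinv {y : ℝ} (hy : y < 0) : Hfun (Hinv y) = y :=
  Function.invFunOn_eq (Hfun_surjOn hy)

/-- auxiliary function in the `g` variable -/
def fF (p g : ℝ) : ℝ :=
  (g - 1/p) * Hfun g + (g * (Real.log g - 1) - Real.log (Real.Gamma g))

lemma phi_hasDeriv {g : ℝ} (hg : 0 < g) :
    HasDerivAt (fun t => t * (Real.log t - 1) - Real.log (Real.Gamma t)) (-Hfun g) g := by
  have h1 : HasDerivAt (fun t : ℝ => t * (Real.log t - 1))
      (1 * (Real.log g - 1) + g * g⁻¹) g :=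
    (hasDerivAt_id g).mul ((Real.hasDerivAt_log hg.ne').sub_const 1)
  refine (h1.sub (hasDerivAt_logGamma hg)).congr_deriv ?_
  rw [Hfun]
  field_simp
  ring

lemma fF_core {p g1 g2 : ℝ} (h1 : 0 < g1) (h12 : g1 < g2) :
    ∃ ξ ∈ Ioo g1 g2, fF p g2 - fF p g1 =
      (g2 - 1/p) * (Hfun g2 - Hfun ξ) + (g1 - 1/p) * (Hfun ξ - Hfun g1) := by
  set φ : ℝ → ℝ := fun t => t * (Real.log t - 1) - Real.log (Real.Gamma t) with hφ
  obtain ⟨ξ, hξ, hslope⟩ := exists_hasDerivAt_eq_slope φ (fun t => -Hfun t) h12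
    (fun x hx => (phi_hasDeriv (lt_of_lt_of_le h1 hx.1)).continuousAt.continuousWithinAt)
    (fun x hx => phi_hasDeriv (lt_trans h1 hx.1))
  refine ⟨ξ, hξ, ?_⟩
  have hne : g2 - g1 ≠ 0 := by linarith
  have hφd : φ g2 - φ g1 = -Hfun ξ * (g2 - g1) := by
    rw [hslope]
    field_simp
  have hexp : fF p g2 - fF p g1 =
      (g2 - 1/p) * Hfun g2 - (g1 - 1/p) * Hfun g1 + (φ g2 - φ g1) := by
    simp only [fF, hφ]
    ring
  rw [hexp, hφd]
  ring

lemma fF_anti {p g1 g2 : ℝ} (h1 : 0 < g1) (h12 : g1 < g2) (h2 : g2 ≤ 1/p) :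
    fF p g2 < fF p g1 := by
  obtain ⟨ξ, hξ, heq⟩ := fF_core (p := p) h1 h12
  have hξ0 : 0 < ξ := lt_trans h1 hξ.1
  have hH1 : Hfun g1 < Hfun ξ := Hfun_strictMonoOn (mem_Ioi.mpr h1) (mem_Ioi.mpr hξ0) hξ.1
  have hH2 : Hfun ξ < Hfun g2 :=
    Hfun_strictMonoOn (mem_Ioi.mpr hξ0) (mem_Ioi.mpr (lt_trans h1 h12)) hξ.2
  have ht1 : (g2 - 1/p) * (Hfun g2 - Hfun ξ) ≤ 0 :=
    mul_nonpos_of_nonpos_of_nonneg (by linarith) (by linarith)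
  have ht2 : (g1 - 1/p) * (Hfun ξ - Hfun g1) < 0 :=
    mul_neg_of_neg_of_pos (by linarith) (by linarith)
  linarith [heq]

lemma fF_mono {p g1 g2 : ℝ} (h0 : 0 < g1) (h1 : 1/p ≤ g1) (h12 : g1 < g2) :
    fF p g1 < fF p g2 := by
  obtain ⟨ξ, hξ, heq⟩ := fF_core (p := p) h0 h12
  have hξ0 : 0 < ξ := lt_trans h0 hξ.1
  have hH1 : Hfun g1 < Hfun ξ := Hfun_strictMonoOn (mem_Ioi.mpr h0) (mem_Ioi.mpr hξ0) hξ.1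
  have hH2 : Hfun ξ < Hfun g2 :=
    Hfun_strictMonoOn (mem_Ioi.mpr hξ0) (mem_Ioi.mpr (lt_trans h0 h12)) hξ.2
  have ht1 : 0 < (g2 - 1/p) * (Hfun g2 - Hfun ξ) :=
    mul_pos (by linarith) (by linarith)
  have ht2 : 0 ≤ (g1 - 1/p) * (Hfun ξ - Hfun g1) :=
    mul_nonneg (by linarith) (by linarith)
  linarith [heq]

lemma ratefn_eq {p θ : ℝ} (hp : 0 < p) (hneg : p * Real.log θ < 0) :
    ratefn p θ = fF p (Gfun p θ) + ((1/p) * (1 + Real.log p) + Real.log (Real.Gamma (1/p))) := by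
  have hHG : Hfun (Gfun p θ) = p * Real.log θ := Hfun_Hinv hneg
  have hkey : (p * Gfun p θ - 1) * Real.log θ = (Gfun p θ - 1/p) * Hfun (Gfun p θ) := by
    rw [hHG]
    field_simp
  rw [ratefn, fF, hkey]
  ring

/-- `I_p` is strictly decreasing on `(0, e^{m_p})` and strictly increasing
on `(e^{m_p}, 1)`. -/
theorem statement17 (p : ℝ) (hp : 1 ≤ p) :
    StrictAntiOn (ratefn p) (Ioo 0 (Real.exp (mConst p))) ∧
    StrictMonoOn (ratefn p) (Ioo (Real.exp (mConst p)) 1) := by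
  have hp0 : 0 < p := lt_of_lt_of_le one_pos hp
  have hip : 0 < 1/p := by positivity
  have hH1p : Hfun (1/p) = p * mConst p := by
    rw [mConst, Hfun, one_div, Real.log_inv]
    field_simp
    ring
  have hH1p_nonpos : p * mConst p ≤ 0 := hH1p ▸ Hfun_nonpos hip
  constructor
  · intro θ1 hθ1 θ2 hθ2 h12
    have hθ1p := hθ1.1
    have hθ2p := hθ2.1
    have hl2 : Real.log θ2 < mConst p := by
      have := Real.log_lt_log hθ2p hθ2.2
      rwa [Real.log_exp] at this
    have hneg2 : p * Real.log θ2 < p * mConst p := by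
      exact mul_lt_mul_of_pos_left hl2 hp0
    have hneg2' : p * Real.log θ2 < 0 := lt_of_lt_of_le hneg2 hH1p_nonpos
    have hneg1' : p * Real.log θ1 < 0 := by
      have := Real.log_lt_log hθ1p h12
      nlinarith
    have hG1 : 0 < Gfun p θ1 := Hinv_pos hneg1'
    have hG2 : 0 < Gfun p θ2 := Hinv_pos hneg2'
    have hHG1 : Hfun (Gfun p θ1) = p * Real.log θ1 := Hfun_Hinv hneg1'
    have hHG2 : Hfun (Gfun p θ2) = p * Real.log θ2 := Hfun_Hinv hneg2'
    have hG12 : Gfun p θ1 < Gfun p θ2 := by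
      have hlt : Hfun (Gfun p θ1) < Hfun (Gfun p θ2) := by
        rw [hHG1, hHG2]
        have := Real.log_lt_log hθ1p h12
        nlinarith
      exact (Hfun_strictMonoOn.lt_iff_lt (mem_Ioi.mpr hG1) (mem_Ioi.mpr hG2)).mp hlt
    have hG2p : Gfun p θ2 < 1/p := by
      have hlt : Hfun (Gfun p θ2) < Hfun (1/p) := by
        rw [hHG2, hH1p]; exact hneg2
      exact (Hfun_strictMonoOn.lt_iff_lt (mem_Ioi.mpr hG2) (mem_Ioi.mpr hip)).mp hlt
    have := fF_anti hG1 hG12 hG2p.le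
    rw [ratefn_eq hp0 hneg1', ratefn_eq hp0 hneg2']
    linarith
  · intro θ1 hθ1 θ2 hθ2 h12
    have hEpos : 0 < Real.exp (mConst p) := Real.exp_pos _
    have hθ1p : 0 < θ1 := lt_trans hEpos hθ1.1
    have hθ2p : 0 < θ2 := lt_trans hEpos hθ2.1
    have hneg2' : p * Real.log θ2 < 0 := by
      have := Real.log_neg hθ2p hθ2.2
      nlinarith
    have hneg1' : p * Real.log θ1 < 0 := by
      have h := Real.log_lt_log hθ1p h12
      nlinarith
    have hG1 : 0 < Gfun p θ1 := Hinv_pos hneg1'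
    have hG2 : 0 < Gfun p θ2 := Hinv_pos hneg2'
    have hHG1 : Hfun (Gfun p θ1) = p * Real.log θ1 := Hfun_Hinv hneg1'
    have hHG2 : Hfun (Gfun p θ2) = p * Real.log θ2 := Hfun_Hinv hneg2'
    have hG12 : Gfun p θ1 < Gfun p θ2 := by
      have hlt : Hfun (Gfun p θ1) < Hfun (Gfun p θ2) := by
        rw [hHG1, hHG2]
        have := Real.log_lt_log hθ1p h12
        nlinarith
      exact (Hfun_strictMonoOn.lt_iff_lt (mem_Ioi.mpr hG1) (mem_Ioi.mpr hG2)).mp hlt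
    have hG1p : 1/p < Gfun p θ1 := by
      have hlt : Hfun (1/p) < Hfun (Gfun p θ1) := by
        rw [hHG1, hH1p]
        have : mConst p < Real.log θ1 := by
          have := Real.log_lt_log hEpos hθ1.1
          rwa [Real.log_exp] at this
        nlinarith
      exact (Hfun_strictMonoOn.lt_iff_lt (mem_Ioi.mpr hip) (mem_Ioi.mpr hG1)).mp hlt
    have := fF_mono hG1 hG1p.le hG12
    rw [ratefn_eq hp0 hneg1', ratefn_eq hp0 hneg2']
    linarith
end
end
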